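/- Suppose φ ∈ L¹(ℝ) ∩ L²(ℝ) satisfies the two-scale relation φ(x) = 2 Σ_{k∈ℤ} h_k φ(2x - k) with finitely many nonzero coefficients h_k (k = 0,…,2p−1) summing to 1. Then Φ = Tφ satisfies the two-scale relation Φ(x) = 2 Σ_{k∈ℤ} H_k Φ(2x - k) with H_k = (h_{k-1} + h_k)/2 for k = 0,…,2p, where h_{-1} = h_{2p} = 0. -/

import Mathlib

open MeasureTheory

/-- The elevation operator `T` with kernel `𝟙_{[x-1,x]}(y)`. -/
noncomputable def Telev (f : ℝ → ℝ) (x : ℝ) : ℝ := ∫ t in (x - 1)..x, f t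

theorem stmt_5 (φ : ℝ → ℝ) (h : ℤ → ℝ) (p : ℕ) (hp : 1 ≤ p)
    (hL1 : Integrable φ) (hL2 : MemLp φ 2 volume)
    (hfin : ∀ k : ℤ, k < 0 ∨ (2 * p : ℤ) - 1 < k → h k = 0)
    (hsum : ∑ k ∈ Finset.range (2 * p), h k = 1)
    (hTSR : ∀ x : ℝ, φ x = 2 * ∑' k : ℤ, h k * φ (2 * x - k)) :
    ∀ x : ℝ, Telev φ x =
      2 * ∑' k : ℤ, ((h (k - 1) + h k) / 2) * Telev φ (2 * x - k) := by
  intro x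
  set s : Finset ℤ := Finset.Icc (0 : ℤ) (2 * p - 1) with hs
  set s' : Finset ℤ := Finset.Icc (0 : ℤ) (2 * p) with hs'
  have hzero : ∀ k : ℤ, k ∉ s → h k = 0 := by
    intro k hk
    rw [hs, Finset.mem_Icc, not_and_or] at hk
    rcases hk with hk | hk
    · exact hfin k (Or.inl (by omega))
    · exact hfin k (Or.inr (by omega))
  -- the two-scale relation as a finite sum
  have hTSR' : ∀ y : ℝ, φ y = 2 * ∑ k ∈ s, h k * φ (2 * y - k) := by
    intro y
    rw [hTSR y, tsum_eq_sum (s := s)]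
    intro k hk
    rw [hzero k hk, zero_mul]
  -- integrability of the dilated translates
  have hint : ∀ k : ℤ, Integrable (fun t : ℝ => φ (2 * t - (k : ℝ))) := by
    intro k
    have h1 : Integrable (fun t : ℝ => φ (t - (k : ℝ))) := hL1.comp_sub_right _
    have h2 := h1.comp_mul_left' (R := 2) two_ne_zero
    simpa using h2
  have hiint : ∀ (k : ℤ) (a b : ℝ), IntervalIntegrable (fun t : ℝ => φ (2 * t - (k : ℝ)))
      volume a b := fun k a b => (hint k).intervalIntegrable
  -- compute Telev φ x
  have step1 : Telev φ x = 2 * ∑ k ∈ s, h k * ∫ t in (x - 1)..x, φ (2 * t - (k : ℝ)) := by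
    unfold Telev
    calc (∫ t in (x - 1)..x, φ t)
        = ∫ t in (x - 1)..x, 2 * ∑ k ∈ s, h k * φ (2 * t - (k : ℝ)) := by
          exact intervalIntegral.integral_congr (fun t _ => hTSR' t)
      _ = 2 * ∫ t in (x - 1)..x, ∑ k ∈ s, h k * φ (2 * t - (k : ℝ)) := by
          rw [intervalIntegral.integral_const_mul]
      _ = 2 * ∑ k ∈ s, ∫ t in (x - 1)..x, h k * φ (2 * t - (k : ℝ)) := by
          rw [intervalIntegral.integral_finset_sum]
          intro k _
          exact ((hint k).const_mul _).intervalIntegrable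
      _ = 2 * ∑ k ∈ s, h k * ∫ t in (x - 1)..x, φ (2 * t - (k : ℝ)) := by
          congr 1
          exact Finset.sum_congr rfl fun k _ => intervalIntegral.integral_const_mul _ _
  have step2 : ∀ k : ℤ, (∫ t in (x - 1)..x, φ (2 * t - (k : ℝ))) =
      (Telev φ (2 * x - k - 1) + Telev φ (2 * x - k)) / 2 := by
    intro k
    rw [intervalIntegral.integral_comp_mul_sub φ two_ne_zero (k : ℝ)]
    have hsplit : (∫ u in (2 * (x - 1) - (k : ℝ))..(2 * x - k - 1), φ u) +
        (∫ u in (2 * x - (k : ℝ) - 1)..(2 * x - k), φ u) =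
        ∫ u in (2 * (x - 1) - (k : ℝ))..(2 * x - k), φ u :=
      intervalIntegral.integral_add_adjacent_intervals
        hL1.intervalIntegrable hL1.intervalIntegrable
    rw [← hsplit]
    unfold Telev
    have e1 : 2 * x - (k : ℝ) - 1 - 1 = 2 * (x - 1) - k := by ring
    rw [e1]
    have : (2 : ℝ)⁻¹ • ((∫ u in (2 * (x - 1) - (k : ℝ))..(2 * x - k - 1), φ u) +
        ∫ u in (2 * x - (k : ℝ) - 1)..(2 * x - k), φ u) = _ := rfl
    rw [smul_eq_mul]
    ring
  -- rewrite the RHS tsum as a finite sum over s'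
  have hrhs : ∑' k : ℤ, ((h (k - 1) + h k) / 2) * Telev φ (2 * x - k) =
      ∑ k ∈ s', ((h (k - 1) + h k) / 2) * Telev φ (2 * x - k) := by
    apply tsum_eq_sum
    intro k hk
    rw [hs', Finset.mem_Icc, not_and_or] at hk
    have h1 : h (k - 1) = 0 := by
      rcases hk with hk | hk
      · exact hfin _ (Or.inl (by omega))
      · exact hfin _ (Or.inr (by omega))
    have h2 : h k = 0 := by
      rcases hk with hk | hk
      · exact hfin _ (Or.inl (by omega))
      · exact hfin _ (Or.inr (by omega))
    rw [h1, h2]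
    ring
  rw [hrhs, step1]
  have step3 : ∑ k ∈ s, h k * ((Telev φ (2 * x - k - 1) + Telev φ (2 * x - k)) / 2) =
      ∑ k ∈ s', (h (k - 1) + h k) / 2 * Telev φ (2 * x - k) := by
    have lhs_eq : ∑ k ∈ s, h k * ((Telev φ (2 * x - k - 1) + Telev φ (2 * x - k)) / 2) =
        (∑ k ∈ s, h k * Telev φ (2 * x - k - 1)
          + ∑ k ∈ s, h k * Telev φ (2 * x - k)) / 2 := by
      rw [← Finset.sum_add_distrib, Finset.sum_div]
      exact Finset.sum_congr rfl fun k _ => by ring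
    have rhs_eq : ∑ k ∈ s', (h (k - 1) + h k) / 2 * Telev φ (2 * x - k) =
        (∑ k ∈ s', h (k - 1) * Telev φ (2 * x - k)
          + ∑ k ∈ s', h k * Telev φ (2 * x - k)) / 2 := by
      rw [← Finset.sum_add_distrib, Finset.sum_div]
      exact Finset.sum_congr rfl fun k _ => by ring
    rw [lhs_eq, rhs_eq]
    congr 1
    congr 1
    · -- reindex: k ↦ k + 1
      have hdrop : ∑ k ∈ s', h (k - 1) * Telev φ (2 * x - k) =
          ∑ k ∈ Finset.Icc (1 : ℤ) (2 * p), h (k - 1) * Telev φ (2 * x - k) := by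
        symm
        apply Finset.sum_subset
        · rw [hs']; exact Finset.Icc_subset_Icc (by omega) le_rfl
        · intro k hk hk'
          rw [hs', Finset.mem_Icc] at hk
          rw [Finset.mem_Icc] at hk'
          have : h (k - 1) = 0 := hfin _ (Or.inl (by omega))
          rw [this, zero_mul]
      rw [hdrop]
      apply Finset.sum_nbij' (i := fun k => k + 1) (j := fun k => k - 1)
      · intro a ha; rw [hs, Finset.mem_Icc] at ha; rw [Finset.mem_Icc]; omega
      · intro a ha; rw [Finset.mem_Icc] at ha; rw [hs, Finset.mem_Icc]; omega
      · intro a _; ring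
      · intro a _; ring
      · intro a _
        have e : (a : ℤ) + 1 - 1 = a := by ring
        rw [e]
        congr 1
        push_cast; ring
    · -- second sums: extend s to s'
      apply Finset.sum_subset
      · rw [hs, hs']; exact Finset.Icc_subset_Icc le_rfl (by omega)
      · intro k _ hk
        rw [hzero k hk, zero_mul]
  calc 2 * ∑ k ∈ s, h k * ∫ t in (x - 1)..x, φ (2 * t - (k : ℝ))
      = 2 * ∑ k ∈ s, h k * ((Telev φ (2 * x - k - 1) + Telev φ (2 * x - k)) / 2) := by
        congr 1
        exact Finset.sum_congr rfl fun k _ => by rw [step2 k]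
    _ = 2 * ∑ k ∈ s', (h (k - 1) + h k) / 2 * Telev φ (2 * x - k) := by rw [step3]
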